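/- If u ≤ v are central idempotents in a symmetric monoidal category C, witnessed by m : U → V with u = v ∘ m, then the assignment A ↦ A on objects and (f : A ⊗ V → B) ↦ f ∘ (A ⊗ m) on morphisms defines a functor C|_{u≤v} : C|v → C|u. -/

import Mathlib

open CategoryTheory MonoidalCategory

variable {C : Type*} [Category C] [MonoidalCategory C]

/-- The multiplication map `U ⊗ U ⟶ U` associated to a candidate central idempotent
`u : U ⟶ I`; `u` is a central idempotent when this map agrees with `λ_U ∘ (u ▷ U)` and
is invertible. -/
abbrev ciMap {U : C} (u : U ⟶ 𝟙_ C) : U ⊗ U ⟶ U :=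
  U ◁ u ≫ (ρ_ U).hom

/-- The identity morphism on `A` in the restricted category `C|u`: the morphism
`A ⊗ u : A ⊗ U ⟶ A` (composed with the right unitor). -/
def restrictId {U : C} (u : U ⟶ 𝟙_ C) (A : C) : A ⊗ U ⟶ A :=
  A ◁ u ≫ (ρ_ A).hom

/-- Composition in the restricted category `C|u`: given `f : A ⊗ U ⟶ B` and
`g : B ⊗ U ⟶ D`, their composite is `g ∘ (f ⊗ U) ∘ (A ⊗ (U ⊗ u))⁻¹`. -/
noncomputable def restrictComp {U : C} (u : U ⟶ 𝟙_ C) [IsIso (ciMap u)] {A B D : C}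
    (f : A ⊗ U ⟶ B) (g : B ⊗ U ⟶ D) : A ⊗ U ⟶ D :=
  A ◁ inv (ciMap u) ≫ (α_ A U U).inv ≫ f ▷ U ≫ g

/-- If `u ≤ v` are central idempotents of a symmetric monoidal category `C`, witnessed by
`m : U ⟶ V` with `u = v ∘ m`, then `A ↦ A` on objects together with
`(f : A ⊗ V ⟶ B) ↦ f ∘ (A ⊗ m)` on morphisms defines a functor `C|v ⥤ C|u`:
it preserves identities and composition. -/
theorem restrict_functor {C : Type*} [Category C] [MonoidalCategory C]
    [SymmetricCategory C] {U V : C} (u : U ⟶ 𝟙_ C) (v : V ⟶ 𝟙_ C) (m : U ⟶ V)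
    (hm : u = m ≫ v)
    (hcu : U ◁ u ≫ (ρ_ U).hom = u ▷ U ≫ (λ_ U).hom) [IsIso (ciMap u)]
    (hcv : V ◁ v ≫ (ρ_ V).hom = v ▷ V ≫ (λ_ V).hom) [IsIso (ciMap v)] :
    (∀ A : C, A ◁ m ≫ restrictId v A = restrictId u A) ∧
    (∀ {A B D : C} (f : A ⊗ V ⟶ B) (g : B ⊗ V ⟶ D),
      A ◁ m ≫ restrictComp v f g = restrictComp u (A ◁ m ≫ f) (B ◁ m ≫ g)) := by
  have hkey : (m ⊗ₘ m) ≫ ciMap v = ciMap u ≫ m := by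
    show (m ⊗ₘ m) ≫ (V ◁ v ≫ (ρ_ V).hom) = (U ◁ u ≫ (ρ_ U).hom) ≫ m
    rw [show V ◁ v = 𝟙 V ⊗ₘ v from (id_tensorHom _ _).symm, tensorHom_comp_tensorHom_assoc,
      Category.comp_id, ← hm, tensorHom_def']
    simp [rightUnitor_naturality]
  have hinv : m ≫ inv (ciMap v) = inv (ciMap u) ≫ (m ⊗ₘ m) := by
    rw [← cancel_epi (ciMap u), IsIso.hom_inv_id_assoc, ← Category.assoc, ← hkey,
      Category.assoc, IsIso.hom_inv_id, Category.comp_id]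
  constructor
  · intro A
    simp [restrictId, ← MonoidalCategory.whiskerLeft_comp_assoc, ← hm]
  · intro A B D f g
    unfold restrictComp
    rw [← MonoidalCategory.whiskerLeft_comp_assoc, hinv,
      MonoidalCategory.whiskerLeft_comp_assoc]
    have h2 : A ◁ (m ⊗ₘ m) ≫ (α_ A V V).inv = (α_ A U U).inv ≫ ((A ◁ m) ⊗ₘ m) := by
      simpa using associator_inv_naturality (𝟙 A) m m
    rw [← Category.assoc (A ◁ (m ⊗ₘ m)), h2]
    simp only [Category.assoc, comp_whiskerRight, MonoidalCategory.tensorHom_def]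
    rw [whisker_exchange_assoc]
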